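/- Let P = ⟨p₁, …, p_n⟩ and Q = ⟨q₁, …, q_n⟩ be sequences of n points in ℝ², let g > 0 with GED(P, Q) ≤ g, and set Δ = g/√n. For a shift b ∈ [0, Δ]², define X_b as the minimum of |Γ(M)| = 2(n − |M|) over all monotone matchings M between P and Q such that id_{Δ,b}(p_i) = id_{Δ,b}(q_j) for every (i, j) ∈ M. If b is chosen uniformly at random from [0, Δ]², then P[X_b ≥ 12√n + 2g] ≤ 1/2. -/

import Mathlib

open MeasureTheory
open scoped ENNReal

noncomputable section

/-- Points in the plane with the Euclidean distance. -/
abbrev Pt := EuclideanSpace ℝ (Fin 2)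

/-- The cell of the grid with side length `Δ`, shifted by `b`, containing the point `p`. -/
def gridId (Δ : ℝ) (b : Fin 2 → ℝ) (p : Pt) : ℤ × ℤ :=
  (⌊(p 0 + b 0) / Δ⌋, ⌊(p 1 + b 1) / Δ⌋)

/-- The box `[0, Δ]²` of possible shifts. -/
def shiftBox (Δ : ℝ) : Set (Fin 2 → ℝ) := Set.Icc 0 (fun _ => Δ)

/-- The uniform (normalized Lebesgue) measure on the box `[0, Δ]²`. -/
def unifShift (Δ : ℝ) : Measure (Fin 2 → ℝ) :=
  (volume (shiftBox Δ))⁻¹ • volume.restrict (shiftBox Δ)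

/-- A monotone matching between index sets `Fin n` and `Fin m`: a set of index pairs with
distinct first indices, distinct second indices, such that first indices and second indices
are ordered consistently. -/
structure MMatch (n m : ℕ) where
  pairs : Finset (Fin n × Fin m)
  inj1 : ∀ p ∈ pairs, ∀ q ∈ pairs, p.1 = q.1 → p = q
  inj2 : ∀ p ∈ pairs, ∀ q ∈ pairs, p.2 = q.2 → p = q
  mono : ∀ p ∈ pairs, ∀ q ∈ pairs, (p.1 < q.1 ↔ p.2 < q.2)

/-- The number of gap points `|Γ(M)|`: indices of both sequences left unmatched by `M`. -/
def gapCount {n m : ℕ} (M : MMatch n m) : ℕ :=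
  (n - M.pairs.card) + (m - M.pairs.card)
/-- The cost `δ(M)` (gap penalty 1) of a matching between the first `n` points of `P` and the
first `m` points of `Q`. -/
def cost (n m : ℕ) (P Q : ℕ → Pt) (M : MMatch n m) : ℝ :=
  (∑ p ∈ M.pairs, dist (P p.1) (Q p.2)) + (gapCount M : ℝ)

/-- The geometric edit distance between `⟨P 0, …, P (n-1)⟩` and `⟨Q 0, …, Q (m-1)⟩`:
the minimum cost over all monotone matchings. -/
def GED (n m : ℕ) (P Q : ℕ → Pt) : ℝ :=
  sInf {c | ∃ M : MMatch n m, c = cost n m P Q M}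

/-- `X b`: the minimum number of gap points `|Γ(M)| = 2(n − |M|)` over all monotone matchings
`M` between `P` and `Q` that only match points lying in a common cell of the grid with side
length `Δ` shifted by `b`. -/
def Xmin (n : ℕ) (Δ : ℝ) (P Q : ℕ → Pt) (b : Fin 2 → ℝ) : ℕ :=
  sInf {k | ∃ M : MMatch n n,
    (∀ p ∈ M.pairs, gridId Δ b (P p.1) = gridId Δ b (Q p.2)) ∧ k = gapCount M}


private lemma oneDim_le {Δ x y : ℝ} (hΔ : 0 < Δ) (hxy : x ≤ y) :
    volume {u ∈ Set.Icc (0:ℝ) Δ | ⌊(x + u) / Δ⌋ ≠ ⌊(y + u) / Δ⌋} ≤ ENNReal.ofReal (y - x) := by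
  by_cases hd : Δ ≤ y - x
  · calc volume {u ∈ Set.Icc (0:ℝ) Δ | ⌊(x + u) / Δ⌋ ≠ ⌊(y + u) / Δ⌋}
        ≤ volume (Set.Icc (0:ℝ) Δ) := measure_mono (Set.sep_subset _ _)
      _ = ENNReal.ofReal Δ := by simp [Real.volume_Icc]
      _ ≤ _ := ENNReal.ofReal_le_ofReal hd
  push_neg at hd
  set c : ℝ := ((⌊x / Δ⌋ : ℝ) + 1) * Δ with hc
  have hfl : (⌊x / Δ⌋ : ℝ) ≤ x / Δ := Int.floor_le _
  have hfl' : x / Δ < (⌊x / Δ⌋ : ℝ) + 1 := Int.lt_floor_add_one _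
  have hcx : c - x ≤ Δ := by
    have : (⌊x / Δ⌋ : ℝ) * Δ ≤ x := (le_div_iff₀ hΔ).mp hfl
    nlinarith [this]
  have hxc : x < c := by
    have : x < ((⌊x / Δ⌋ : ℝ) + 1) * Δ := (div_lt_iff₀ hΔ).mp hfl'
    linarith [this]
  have hsub : {u ∈ Set.Icc (0:ℝ) Δ | ⌊(x + u) / Δ⌋ ≠ ⌊(y + u) / Δ⌋} ⊆
      Set.Icc (max (c - y) 0) (min (c - x) Δ) ∪
      Set.Icc (max (c + Δ - y) 0) (min (c + Δ - x) Δ) := by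
    rintro u ⟨⟨hu0, hu1⟩, hne⟩
    set k := ⌊(y + u) / Δ⌋ with hk
    have hle : ⌊(x + u) / Δ⌋ ≤ k :=
      Int.floor_le_floor ((div_le_div_iff_of_pos_right hΔ).mpr (by linarith))
    have hlt : ⌊(x + u) / Δ⌋ < k := lt_of_le_of_ne hle hne
    have h1 : (k : ℝ) * Δ ≤ y + u := by
      have := Int.floor_le ((y + u) / Δ)
      rw [← le_div_iff₀ hΔ]; exact this
    have h2 : x + u < (k : ℝ) * Δ := by
      have : (x + u) / Δ < (k : ℝ) := by exact_mod_cast Int.floor_lt.mp hlt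
      rw [← div_lt_iff₀ hΔ]; exact this
    have hk1 : ⌊x / Δ⌋ + 1 ≤ k := by
      have : x / Δ < (k : ℝ) := by
        rw [div_lt_iff₀ hΔ]; linarith
      have := Int.floor_lt.mpr this
      omega
    have hk2 : k ≤ ⌊x / Δ⌋ + 2 := by
      have h3 : (k : ℝ) * Δ < x + 2 * Δ := by linarith
      have h4 : (k : ℝ) < x / Δ + 2 := by
        calc (k : ℝ) = (k : ℝ) * Δ / Δ := by field_simp
          _ < (x + 2 * Δ) / Δ := (div_lt_div_iff_of_pos_right hΔ).mpr h3
          _ = x / Δ + 2 := by field_simp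
      have h5 : (k : ℝ) < (⌊x / Δ⌋ : ℝ) + 3 := by linarith
      have h6 : k < ⌊x / Δ⌋ + 3 := by exact_mod_cast h5
      omega
    have hkc : k = ⌊x / Δ⌋ + 1 ∨ k = ⌊x / Δ⌋ + 2 := by omega
    rcases hkc with h | h
    · left
      have hck : (k : ℝ) * Δ = c := by rw [h]; push_cast; ring
      rw [Set.mem_Icc]
      constructor
      · exact max_le (by linarith) hu0
      · exact le_min (by linarith) hu1
    · right
      have hck : (k : ℝ) * Δ = c + Δ := by rw [h, hc]; push_cast; ring
      rw [Set.mem_Icc]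
      constructor
      · exact max_le (by linarith) hu0
      · exact le_min (by linarith) hu1
  refine (measure_mono hsub).trans ((measure_union_le _ _).trans ?_)
  rw [Real.volume_Icc, Real.volume_Icc]
  rcases le_or_gt c y with h | h
  · -- c ≤ y : first term ≤ ofReal (c - x), second ≤ ofReal (y - c)
    have t1 : ENNReal.ofReal (min (c - x) Δ - max (c - y) 0) ≤ ENNReal.ofReal (c - x) :=
      ENNReal.ofReal_le_ofReal (by
        have := min_le_left (c - x) Δ; have := le_max_right (c - y) 0; linarith)
    have t2 : ENNReal.ofReal (min (c + Δ - x) Δ - max (c + Δ - y) 0) ≤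
        ENNReal.ofReal (y - c) :=
      ENNReal.ofReal_le_ofReal (by
        have := min_le_right (c + Δ - x) Δ; have := le_max_left (c + Δ - y) 0; linarith)
    calc _ ≤ ENNReal.ofReal (c - x) + ENNReal.ofReal (y - c) := add_le_add t1 t2
      _ = ENNReal.ofReal (y - x) := by
          rw [← ENNReal.ofReal_add (by linarith) (by linarith)]; ring_nf
  · -- y < c : second term is ≤ 0, first ≤ ofReal (y - x)
    have t1 : ENNReal.ofReal (min (c - x) Δ - max (c - y) 0) ≤ ENNReal.ofReal (y - x) :=
      ENNReal.ofReal_le_ofReal (by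
        have := min_le_left (c - x) Δ; have := le_max_left (c - y) 0; linarith)
    have t2 : ENNReal.ofReal (min (c + Δ - x) Δ - max (c + Δ - y) 0) = 0 := by
      apply ENNReal.ofReal_eq_zero.mpr
      have := min_le_right (c + Δ - x) Δ; have := le_max_left (c + Δ - y) 0; linarith
    rw [t2, add_zero]; exact t1


private lemma oneDim_abs {Δ x y : ℝ} (hΔ : 0 < Δ) :
    volume {u ∈ Set.Icc (0:ℝ) Δ | ⌊(x + u) / Δ⌋ ≠ ⌊(y + u) / Δ⌋} ≤ ENNReal.ofReal |x - y| := by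
  rcases le_total x y with h | h
  · rw [abs_sub_comm, abs_of_nonneg (sub_nonneg.mpr h)]
    exact oneDim_le hΔ h
  · rw [abs_of_nonneg (sub_nonneg.mpr h)]
    have hset : {u ∈ Set.Icc (0:ℝ) Δ | ⌊(x + u) / Δ⌋ ≠ ⌊(y + u) / Δ⌋} =
        {u ∈ Set.Icc (0:ℝ) Δ | ⌊(y + u) / Δ⌋ ≠ ⌊(x + u) / Δ⌋} := by
      ext u; exact and_congr_right fun _ => ne_comm
    rw [hset]
    exact oneDim_le hΔ h

private lemma coord_le_dist (p q : Pt) (i : Fin 2) : |p i - q i| ≤ dist p q := by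
  rw [EuclideanSpace.dist_eq, ← Real.sqrt_sq_eq_abs]
  apply Real.sqrt_le_sqrt
  calc (p i - q i) ^ 2 = dist (p i) (q i) ^ 2 := by rw [Real.dist_eq, sq_abs]
    _ ≤ ∑ j, dist (p j) (q j) ^ 2 :=
        Finset.single_le_sum (f := fun j => dist (p j) (q j) ^ 2)
          (fun j _ => sq_nonneg _) (Finset.mem_univ i)

private lemma pair_bound {Δ : ℝ} (hΔ : 0 < Δ) (p q : Pt) :
    volume {b ∈ shiftBox Δ | gridId Δ b p ≠ gridId Δ b q} ≤
      ENNReal.ofReal (2 * Δ * dist p q) := by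
  set E : Fin 2 → Set ℝ :=
    fun i => {u ∈ Set.Icc (0:ℝ) Δ | ⌊(p i + u) / Δ⌋ ≠ ⌊(q i + u) / Δ⌋} with hE
  have hsub : {b ∈ shiftBox Δ | gridId Δ b p ≠ gridId Δ b q} ⊆
      (Set.univ.pi fun j => if j = 0 then E 0 else Set.Icc 0 Δ) ∪
      (Set.univ.pi fun j => if j = 1 then E 1 else Set.Icc 0 Δ) := by
    rintro b ⟨hb, hne⟩
    have hb' : ∀ j, b j ∈ Set.Icc (0:ℝ) Δ := fun j => ⟨hb.1 j, hb.2 j⟩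
    have hor : ⌊(p 0 + b 0)/Δ⌋ ≠ ⌊(q 0 + b 0)/Δ⌋ ∨ ⌊(p 1 + b 1)/Δ⌋ ≠ ⌊(q 1 + b 1)/Δ⌋ := by
      by_contra hcon
      push_neg at hcon
      exact hne (by simp [gridId, hcon.1, hcon.2])
    rcases hor with h | h
    · left; rw [Set.mem_univ_pi]; intro j
      fin_cases j
      · simpa [E] using ⟨hb' 0, h⟩
      · simpa using hb' 1
    · right; rw [Set.mem_univ_pi]; intro j
      fin_cases j
      · simpa using hb' 0
      · simpa [E] using ⟨hb' 1, h⟩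
  refine (measure_mono hsub).trans ((measure_union_le _ _).trans ?_)
  have hIcc : volume (Set.Icc (0:ℝ) Δ) = ENNReal.ofReal Δ := by simp [Real.volume_Icc]
  have key : ∀ i : Fin 2, volume (E i) ≤ ENNReal.ofReal (dist p q) := by
    intro i
    refine (oneDim_abs hΔ).trans (ENNReal.ofReal_le_ofReal (coord_le_dist p q i))
  have t0 : volume (Set.univ.pi fun j : Fin 2 => if j = 0 then E 0 else Set.Icc (0:ℝ) Δ)
      ≤ ENNReal.ofReal (dist p q) * ENNReal.ofReal Δ := by
    rw [volume_pi_pi, Fin.prod_univ_two]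
    simp only [if_pos rfl, if_neg (by decide : (1 : Fin 2) ≠ 0)]
    rw [hIcc]
    exact mul_le_mul_left (key 0) _
  have t1 : volume (Set.univ.pi fun j : Fin 2 => if j = 1 then E 1 else Set.Icc (0:ℝ) Δ)
      ≤ ENNReal.ofReal Δ * ENNReal.ofReal (dist p q) := by
    rw [volume_pi_pi, Fin.prod_univ_two]
    simp only [if_pos rfl, if_neg (by decide : (0 : Fin 2) ≠ 1)]
    rw [hIcc]
    exact mul_le_mul_right (key 1) _
  calc _ ≤ ENNReal.ofReal (dist p q) * ENNReal.ofReal Δ +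
        ENNReal.ofReal Δ * ENNReal.ofReal (dist p q) := add_le_add t0 t1
    _ = ENNReal.ofReal (2 * Δ * dist p q) := by
        rw [← ENNReal.ofReal_mul dist_nonneg, ← ENNReal.ofReal_mul hΔ.le,
          ← ENNReal.ofReal_add (by positivity) (by positivity)]
        ring_nf

private instance mmatchFinite (n m : ℕ) : Finite (MMatch n m) :=
  Finite.of_injective (fun M => M.pairs) (fun a b h => by cases a; cases b; simpa using h)

private lemma mmatch_card_le {n m : ℕ} (M : MMatch n m) : M.pairs.card ≤ n := by
  calc M.pairs.card ≤ (Finset.univ : Finset (Fin n)).card :=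
        Finset.card_le_card_of_injOn Prod.fst (fun a _ => Finset.mem_univ _)
          (fun a ha b hb h => M.inj1 a ha b hb h)
    _ = n := Finset.card_univ.trans (Fintype.card_fin n)

private lemma ged_attained (n : ℕ) (P Q : ℕ → Pt) :
    ∃ M : MMatch n n, GED n n P Q = cost n n P Q M := by
  have hne : {c | ∃ M : MMatch n n, c = cost n n P Q M}.Nonempty :=
    ⟨cost n n P Q ⟨∅, by simp, by simp, by simp⟩, ⟨_, rfl⟩⟩
  have hfin : {c | ∃ M : MMatch n n, c = cost n n P Q M}.Finite := by
    have : {c | ∃ M : MMatch n n, c = cost n n P Q M} = Set.range (cost n n P Q) := by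
      ext c; simp [Set.mem_range, eq_comm]
    rw [this]; exact Set.finite_range _
  exact hne.csInf_mem hfin

private lemma measurable_sep (Δ : ℝ) (p q : Pt) :
    MeasurableSet {b : Fin 2 → ℝ | gridId Δ b p ≠ gridId Δ b q} := by
  have hgm : ∀ r : Pt, Measurable fun b : Fin 2 → ℝ => gridId Δ b r := by
    intro r
    apply Measurable.prodMk
    · exact ((measurable_const.add
        (measurable_pi_apply (0 : Fin 2) : Measurable fun b : Fin 2 → ℝ => b 0)).div_const
          Δ).floor
    · exact ((measurable_const.add
        (measurable_pi_apply (1 : Fin 2) : Measurable fun b : Fin 2 → ℝ => b 1)).div_const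
          Δ).floor
  have : {b : Fin 2 → ℝ | gridId Δ b p ≠ gridId Δ b q} =
      {b : Fin 2 → ℝ | gridId Δ b p = gridId Δ b q}ᶜ := rfl
  rw [this]
  exact (measurableSet_eq_fun (hgm p) (hgm q)).compl


/-- If `GED(P, Q) ≤ g` and `Δ = g / √n`, then for a uniformly random shift `b ∈ [0, Δ]²`,
the probability that `X b ≥ 12√n + 2g` is at most `1/2`. -/
theorem prob_Xmin_large_le (n : ℕ) (P Q : ℕ → Pt) (g : ℝ) (hg : 0 < g)
    (hged : GED n n P Q ≤ g) (Δ : ℝ) (hΔ : Δ = g / Real.sqrt n) :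
    unifShift Δ {b | 12 * Real.sqrt n + 2 * g ≤ (Xmin n Δ P Q b : ℝ)} ≤ 1 / 2 := by
  set bad := {b | 12 * Real.sqrt n + 2 * g ≤ (Xmin n Δ P Q b : ℝ)} with hbad
  rcases Nat.eq_zero_or_pos n with hn | hn
  · -- degenerate case n = 0 : Δ = 0 and the box is a null set
    have hΔ0 : Δ = 0 := by simp [hΔ, hn]
    have hbox0 : volume (shiftBox Δ) = 0 := by
      rw [shiftBox, Real.volume_Icc_pi]
      simp [hΔ0]
    have hres : volume.restrict (shiftBox Δ) bad = 0 := by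
      have : volume.restrict (shiftBox Δ) bad ≤ volume.restrict (shiftBox Δ) Set.univ :=
        measure_mono (Set.subset_univ _)
      rw [Measure.restrict_apply_univ] at this
      exact le_antisymm (this.trans hbox0.le) zero_le
    rw [unifShift, Measure.smul_apply, smul_eq_mul, hres, mul_zero]
    exact zero_le
  -- main case n ≥ 1
  have hsq : 0 < Real.sqrt n := Real.sqrt_pos.mpr (by exact_mod_cast hn)
  have hΔpos : 0 < Δ := hΔ ▸ div_pos hg hsq
  have hgΔ : g = Δ * Real.sqrt n := by rw [hΔ]; field_simp
  obtain ⟨M₀, hM₀⟩ := ged_attained n P Q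
  have hcost : cost n n P Q M₀ ≤ g := hM₀ ▸ hged
  have hdist_nonneg : (0:ℝ) ≤ ∑ p ∈ M₀.pairs, dist (P p.1) (Q p.2) :=
    Finset.sum_nonneg fun p _ => dist_nonneg
  have hgap_le : (gapCount M₀ : ℝ) ≤ g := by
    have := hcost; rw [cost] at this; linarith
  have hsum_le : ∑ p ∈ M₀.pairs, dist (P p.1) (Q p.2) ≤ g := by
    have := hcost; rw [cost] at this
    have : (0:ℝ) ≤ (gapCount M₀ : ℝ) := Nat.cast_nonneg _
    linarith [hcost, this, (by rw [cost] : cost n n P Q M₀ =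
      (∑ p ∈ M₀.pairs, dist (P p.1) (Q p.2)) + (gapCount M₀ : ℝ))]
  -- the number of separated pairs
  set s : (Fin 2 → ℝ) → ℕ := fun b =>
    (M₀.pairs.filter fun p => gridId Δ b (P p.1) ≠ gridId Δ b (Q p.2)).card with hs
  -- pointwise bound Xmin ≤ gapCount M₀ + 2 * s b
  have hpoint : ∀ b, (Xmin n Δ P Q b : ℝ) ≤ (gapCount M₀ : ℝ) + 2 * (s b : ℝ) := by
    intro b
    set Mb : MMatch n n :=
      ⟨M₀.pairs.filter fun p => gridId Δ b (P p.1) = gridId Δ b (Q p.2),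
        fun p hp q hq h => M₀.inj1 p (Finset.mem_filter.mp hp).1 q (Finset.mem_filter.mp hq).1 h,
        fun p hp q hq h => M₀.inj2 p (Finset.mem_filter.mp hp).1 q (Finset.mem_filter.mp hq).1 h,
        fun p hp q hq => M₀.mono p (Finset.mem_filter.mp hp).1 q (Finset.mem_filter.mp hq).1⟩
      with hMb
    have hx : Xmin n Δ P Q b ≤ gapCount Mb :=
      Nat.sInf_le ⟨Mb, fun p hp => (Finset.mem_filter.mp hp).2, rfl⟩
    have hcards : Mb.pairs.card + s b = M₀.pairs.card := by
      rw [hMb, hs]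
      exact Finset.card_filter_add_card_filter_not _
    have hcard0 : M₀.pairs.card ≤ n := mmatch_card_le M₀
    have hnat : gapCount Mb ≤ gapCount M₀ + 2 * s b := by
      rw [gapCount, gapCount]; omega
    calc (Xmin n Δ P Q b : ℝ) ≤ (gapCount Mb : ℝ) := by exact_mod_cast hx
      _ ≤ (gapCount M₀ : ℝ) + 2 * (s b : ℝ) := by exact_mod_cast hnat
  -- the bad event forces many separated pairs
  have hsubset : bad ⊆ {b | ENNReal.ofReal (6 * Real.sqrt n) ≤ (s b : ℝ≥0∞)} := by
    intro b hb
    have h1 : 12 * Real.sqrt n + 2 * g ≤ (Xmin n Δ P Q b : ℝ) := hb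
    have h2 := hpoint b
    have h3 : 6 * Real.sqrt n ≤ (s b : ℝ) := by linarith
    have : ENNReal.ofReal (6 * Real.sqrt n) ≤ ENNReal.ofReal ((s b : ℝ)) :=
      ENNReal.ofReal_le_ofReal h3
    rwa [ENNReal.ofReal_natCast] at this
  -- Markov's inequality
  set μ := volume.restrict (shiftBox Δ) with hμ
  set f : (Fin 2 → ℝ) → ℝ≥0∞ := fun b => (s b : ℝ≥0∞) with hf
  have hfeq : f = fun b => ∑ p ∈ M₀.pairs,
      Set.indicator {b' | gridId Δ b' (P p.1) ≠ gridId Δ b' (Q p.2)} (fun _ => (1:ℝ≥0∞)) b := by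
    funext b
    rw [hf, hs]
    simp only [Finset.card_filter, Nat.cast_sum, Set.indicator_apply, Set.mem_setOf_eq]
    exact Finset.sum_congr rfl fun p _ => by split <;> simp
  have hfmeas : Measurable f := by
    rw [hfeq]
    exact Finset.measurable_sum _ fun p _ =>
      (measurable_const.indicator (measurable_sep Δ (P p.1) (Q p.2)))
  have hlint : ∫⁻ b, f b ∂μ ≤ ENNReal.ofReal (2 * Δ * g) := by
    rw [hfeq, lintegral_finset_sum _ (fun p _ =>
      measurable_const.indicator (measurable_sep Δ (P p.1) (Q p.2)))]
    have hterm : ∀ p ∈ M₀.pairs,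
        (∫⁻ b, Set.indicator {b' | gridId Δ b' (P p.1) ≠ gridId Δ b' (Q p.2)}
          (fun _ => (1:ℝ≥0∞)) b ∂μ) ≤ ENNReal.ofReal (2 * Δ * dist (P p.1) (Q p.2)) := by
      intro p _
      rw [lintegral_indicator_const (measurable_sep Δ (P p.1) (Q p.2)), one_mul, hμ,
        Measure.restrict_apply (measurable_sep Δ (P p.1) (Q p.2))]
      have : {b : Fin 2 → ℝ | gridId Δ b (P p.1) ≠ gridId Δ b (Q p.2)} ∩ shiftBox Δ =
          {b ∈ shiftBox Δ | gridId Δ b (P p.1) ≠ gridId Δ b (Q p.2)} := by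
        ext b; simp [Set.mem_inter_iff, and_comm]
      rw [this]
      exact pair_bound hΔpos (P p.1) (Q p.2)
    calc ∑ p ∈ M₀.pairs, _ ≤ ∑ p ∈ M₀.pairs, ENNReal.ofReal (2 * Δ * dist (P p.1) (Q p.2)) :=
          Finset.sum_le_sum hterm
      _ = ENNReal.ofReal (∑ p ∈ M₀.pairs, 2 * Δ * dist (P p.1) (Q p.2)) :=
          (ENNReal.ofReal_sum_of_nonneg fun p _ => by positivity).symm
      _ ≤ ENNReal.ofReal (2 * Δ * g) := by
          apply ENNReal.ofReal_le_ofReal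
          rw [← Finset.mul_sum]
          have h2Δ : (0:ℝ) ≤ 2 * Δ := by linarith
          calc 2 * Δ * (∑ p ∈ M₀.pairs, dist (P p.1) (Q p.2)) ≤ 2 * Δ * g := by
                exact mul_le_mul_of_nonneg_left hsum_le h2Δ
            _ = 2 * Δ * g := rfl
  have hmarkov : μ {b | ENNReal.ofReal (6 * Real.sqrt n) ≤ f b} ≤
      ENNReal.ofReal (2 * Δ * g) / ENNReal.ofReal (6 * Real.sqrt n) := by
    refine (meas_ge_le_lintegral_div hfmeas.aemeasurable ?_ ?_).trans ?_
    · exact (ENNReal.ofReal_pos.mpr (by positivity)).ne'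
    · exact ENNReal.ofReal_ne_top
    · exact ENNReal.div_le_div_right hlint _
  have hratio : ENNReal.ofReal (2 * Δ * g) / ENNReal.ofReal (6 * Real.sqrt n) =
      ENNReal.ofReal (Δ * Δ / 3) := by
    rw [← ENNReal.ofReal_div_of_pos (by positivity)]
    congr 1
    rw [hgΔ]
    field_simp
    ring
  -- put it together
  have hbox : volume (shiftBox Δ) = ENNReal.ofReal (Δ * Δ) := by
    rw [shiftBox, Real.volume_Icc_pi]
    simp only [Pi.zero_apply, sub_zero]
    rw [Fin.prod_univ_two (f := fun _ => ENNReal.ofReal Δ), ← ENNReal.ofReal_mul hΔpos.le]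
  calc unifShift Δ bad = (volume (shiftBox Δ))⁻¹ * μ bad := by
        rw [unifShift, Measure.smul_apply, smul_eq_mul, hμ]
    _ ≤ (volume (shiftBox Δ))⁻¹ * (ENNReal.ofReal (2 * Δ * g) / ENNReal.ofReal (6 * Real.sqrt n)) := by
        exact mul_le_mul_right ((measure_mono hsubset).trans hmarkov) _
    _ = (ENNReal.ofReal (Δ * Δ))⁻¹ * ENNReal.ofReal (Δ * Δ / 3) := by rw [hratio, hbox]
    _ = ENNReal.ofReal (Δ * Δ / 3) / ENNReal.ofReal (Δ * Δ) := by
        rw [ENNReal.div_eq_inv_mul]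
    _ = ENNReal.ofReal ((Δ * Δ / 3) / (Δ * Δ)) := by
        rw [← ENNReal.ofReal_div_of_pos (by positivity : (0:ℝ) < Δ * Δ)]
    _ = ENNReal.ofReal (1 / 3) := by
        congr 1; field_simp
    _ ≤ 1 / 2 := by
        rw [show (1 / 2 : ℝ≥0∞) = ENNReal.ofReal (1 / 2) by
          rw [ENNReal.ofReal_div_of_pos (by norm_num)]; norm_num]
        exact ENNReal.ofReal_le_ofReal (by norm_num)
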